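/- Fix a face F ⪯ A and let Γ_F(M) denote, for a ℤ^d-graded S_A-module M, the submodule of the localization M[∂^{−F}] consisting of the elements annihilated by some power of the ideal of S_A generated by {t^{a_i} : a_i ∉ F}. Then for faces F′ ⪯ A: Γ_F(ℂ{ℕF′−ℕA}) = ℂ{ℕF−ℕA} if F′ = F, and Γ_F(ℂ{ℕF′−ℕA}) = 0 if F′ ≠ F. Consequently, applying Γ_F termwise to the dualizing complex ω•_{S_A} yields a complex concentrated in cohomological degree d_{A/F} with value ℂ{ℕF−ℕA}. -/

import Mathlib

/-!
Common setup: `A` is a `d × n` integer matrix, given by its columns `a : Fin n → Lat d`,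
with `ℤA = ℤ^d` (`SpansZ`) and `ℕA` pointed (`Pointed`).  Faces, semigroups, graded
modules, quasidegree sets, the dualizing complex `ω•_{S_A}` and the Ishida complexes
`℧•_F` are formalized below; all cohomology statements are expressed via the
(ℤ^d-)graded components of these complexes.
-/

namespace GKZ

open scoped Classical

noncomputable section

abbrev Lat (d : ℕ) := Fin d → ℤ
abbrev CS (d : ℕ) := Fin d → ℂ
abbrev Laur (d : ℕ) := AddMonoidAlgebra ℂ (Lat d)

/-- Inclusion ℤ^d ⊆ ℂ^d. -/
def toC {d : ℕ} (α : Lat d) : CS d := fun i => (α i : ℂ)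
/-- Inclusion ℤ^d ⊆ ℝ^d. -/
def toR {d : ℕ} (α : Lat d) : Fin d → ℝ := fun i => (α i : ℝ)
/-- The monomial t^α in the Laurent polynomial ring ℂ[ℤ^d]. -/
def mono {d : ℕ} (α : Lat d) : Laur d := AddMonoidAlgebra.single α 1

variable {d n : ℕ}

/-- The affine semigroup ℕA generated by the columns of `A`. -/
def NA (a : Fin n → Lat d) : AddSubmonoid (Lat d) := AddSubmonoid.closure (Set.range a)

/-- ℕA is pointed: ℕA ∩ (−ℕA) = {0}. -/
def Pointed (a : Fin n → Lat d) : Prop := ∀ x ∈ NA a, -x ∈ NA a → x = 0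

/-- ℤA = ℤ^d. -/
def SpansZ (a : Fin n → Lat d) : Prop :=
  AddSubgroup.closure (Set.range a) = (⊤ : AddSubgroup (Lat d))

/-- The real cone ℝ₊F spanned by the columns indexed by `F`. -/
def cone (a : Fin n → Lat d) (F : Set (Fin n)) : Set (Fin d → ℝ) :=
  { x | ∃ c : Fin n → ℝ, (∀ i, 0 ≤ c i) ∧ (∀ i, i ∉ F → c i = 0) ∧ x = ∑ i, c i • toR (a i) }

/-- `F` is a face of `A`: ℝ₊F is a face of the cone ℝ₊A, and `F` consists of all the
columns of `A` lying on that face. -/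
def IsFace (a : Fin n → Lat d) (F : Set (Fin n)) : Prop :=
  (∀ x y, x ∈ cone a Set.univ → y ∈ cone a Set.univ →
      x + y ∈ cone a F → x ∈ cone a F ∧ y ∈ cone a F) ∧
  (∀ i, toR (a i) ∈ cone a F → i ∈ F)

/-- ℕF. -/
def NFace (a : Fin n → Lat d) (F : Set (Fin n)) : AddSubmonoid (Lat d) :=
  AddSubmonoid.closure (a '' F)

/-- ℤF. -/
def ZFace (a : Fin n → Lat d) (F : Set (Fin n)) : AddSubgroup (Lat d) :=
  AddSubgroup.closure (a '' F)

/-- ℂF ⊆ ℂ^d. -/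
def CFace (a : Fin n → Lat d) (F : Set (Fin n)) : Submodule ℂ (CS d) :=
  Submodule.span ℂ (toC '' (a '' F))

/-- d_F, the rank of ℤF. -/
def dimF (a : Fin n → Lat d) (F : Set (Fin n)) : ℕ :=
  Module.finrank ℤ (Submodule.span ℤ (a '' F))

/-- σ_F, the sum of the columns of F. -/
def sigmaF (a : Fin n → Lat d) (F : Set (Fin n)) : Lat d :=
  ∑ i : Fin n, if i ∈ F then a i else 0

/-- ε_A = a_1 + ⋯ + a_n. -/
def epsA (a : Fin n → Lat d) : Lat d := ∑ i : Fin n, a i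

/-- ℕA − ℕF ⊆ ℤ^d. -/
def NAmNF (a : Fin n → Lat d) (F : Set (Fin n)) : Set (Lat d) :=
  {γ | ∃ u ∈ NA a, ∃ v ∈ NFace a F, γ = u - v}

/-- ℕF − ℕA ⊆ ℤ^d. -/
def NFmNA (a : Fin n → Lat d) (F : Set (Fin n)) : Set (Lat d) :=
  {γ | ∃ u ∈ NFace a F, ∃ v ∈ NA a, γ = u - v}

/-- ℕF − ℕH ⊆ ℤ^d. -/
def NFmNH (a : Fin n → Lat d) (F H : Set (Fin n)) : Set (Lat d) :=
  {γ | ∃ u ∈ NFace a F, ∃ v ∈ NFace a H, γ = u - v}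

/-- ℕA is normal: ℕA = ℤ^d ∩ ℝ₊A. -/
def Normal (a : Fin n → Lat d) : Prop :=
  ∀ γ : Lat d, γ ∈ NA a ↔ toR γ ∈ cone a Set.univ

/-- The Zariski closure of a subset of ℂ^d. -/
def zClosure {d : ℕ} (T : Set (CS d)) : Set (CS d) :=
  {x | ∀ p : MvPolynomial (Fin d) ℂ, (∀ y ∈ T, MvPolynomial.eval y p = 0) →
    MvPolynomial.eval x p = 0}

def IsZClosed {d : ℕ} (Z : Set (CS d)) : Prop := zClosure Z ⊆ Z

/-- Irreducibility of a subset of ℂ^d in the Zariski topology. -/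
def ZIrred {d : ℕ} (Z : Set (CS d)) : Prop :=
  Z.Nonempty ∧ ∀ C₁ C₂ : Set (CS d), IsZClosed C₁ → IsZClosed C₂ →
    Z ⊆ C₁ ∪ C₂ → Z ⊆ C₁ ∨ Z ⊆ C₂

/-- Krull (topological) dimension of a subset of ℂ^d with the Zariski topology:
the Krull dimension of the poset of irreducible Zariski-closed subsets contained in it. -/
def zdim {d : ℕ} (Z : Set (CS d)) : WithBot ℕ∞ :=
  Order.krullDim {C : Set (CS d) // C ⊆ Z ∧ IsZClosed C ∧ ZIrred C}

/-- `Z` is an irreducible component of `W`: a maximal irreducible Zariski-closed subset. -/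
def IsIrredComp {d : ℕ} (Z W : Set (CS d)) : Prop :=
  Z ⊆ W ∧ IsZClosed Z ∧ ZIrred Z ∧
    ∀ Z' : Set (CS d), IsZClosed Z' → ZIrred Z' → Z ⊆ Z' → Z' ⊆ W → Z' = Z

/-- The type of faces of `A`. -/
def FaceT (a : Fin n → Lat d) := {G : Set (Fin n) // IsFace a G}

instance (a : Fin n → Lat d) : Finite (FaceT a) := by
  unfold FaceT; infer_instance

noncomputable instance (a : Fin n → Lat d) : Fintype (FaceT a) := Fintype.ofFinite _

/-- Degree set of the localization M[∂^{−G}] of the monomial module with degree set `E`: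
the set E − ℕG. -/
def locE (a : Fin n → Lat d) (E : Set (Lat d)) (G : Set (Fin n)) : Set (Lat d) :=
  {γ | ∃ f ∈ NFace a G, γ + f ∈ E}

/-- Functions supported on a subset, as a ℂ-submodule of the function space. -/
def funSupported {ι : Type*} (S : Set ι) : Submodule ℂ (ι → ℂ) where
  carrier := {c | ∀ i, i ∉ S → c i = 0}
  add_mem' := by
    intro x y hx hy i hi
    simp only [Set.mem_setOf_eq] at hx hy
    simp [Pi.add_apply, hx i hi, hy i hi]
  zero_mem' := by intro i _; rfl
  smul_mem' := by
    intro r x hx i hi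
    simp only [Set.mem_setOf_eq] at hx
    simp [Pi.smul_apply, hx i hi]

/-- The degree-γ part of the term of the Ishida complex ℧•_F(M) (base face `F`, monomial
module with degree set `E`) whose summands are indexed by the faces of absolute dimension
`j` (cohomological degree `j − d_F`): functions on the faces `G ⊇ F` with `d_G = j` and
`γ ∈ E − ℕG`. -/
def ishChain (a : Fin n → Lat d) (E : Set (Lat d)) (F : Set (Fin n)) (j : ℤ) (γ : Lat d) :
    Submodule ℂ (FaceT a → ℂ) :=
  funSupported {G : FaceT a | F ⊆ G.1 ∧ (dimF a G.1 : ℤ) = j ∧ γ ∈ locE a E G.1}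

/-- The differential of the Ishida complex (in each ℤ^d-degree): the component from a face
`G'` into a face `G''` covering it is `ε G' G''` times the natural localization map. -/
def ishDelta (a : Fin n → Lat d) (ε : Set (Fin n) → Set (Fin n) → ℂ) :
    (FaceT a → ℂ) →ₗ[ℂ] (FaceT a → ℂ) where
  toFun c := fun G'' => ∑ G' : FaceT a,
    if G'.1 ⊆ G''.1 ∧ dimF a G''.1 = dimF a G'.1 + 1 then ε G'.1 G''.1 * c G' else 0
  map_add' x y := by
    funext G''
    simp only [Pi.add_apply, ← Finset.sum_add_distrib]
    refine Finset.sum_congr rfl fun G' _ => ?_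
    by_cases h : G'.1 ⊆ G''.1 ∧ dimF a G''.1 = dimF a G'.1 + 1
    · simp [h, mul_add]
    · simp [h]
  map_smul' r x := by
    funext G''
    simp only [Pi.smul_apply, smul_eq_mul, RingHom.id_apply, Finset.mul_sum]
    refine Finset.sum_congr rfl fun G' _ => ?_
    by_cases h : G'.1 ⊆ G''.1 ∧ dimF a G''.1 = dimF a G'.1 + 1
    · simp only [h, and_self, if_true]; ring
    · simp [h]

/-- Degree-γ cocycles of the Ishida complex at absolute dimension `j`. -/
def ishZ (a : Fin n → Lat d) (E : Set (Lat d)) (ε : Set (Fin n) → Set (Fin n) → ℂ)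
    (F : Set (Fin n)) (j : ℤ) (γ : Lat d) : Submodule ℂ (FaceT a → ℂ) :=
  ishChain a E F j γ ⊓ LinearMap.ker (ishDelta a ε)

/-- Degree-γ coboundaries of the Ishida complex at absolute dimension `j`. -/
def ishB (a : Fin n → Lat d) (E : Set (Lat d)) (ε : Set (Fin n) → Set (Fin n) → ℂ)
    (F : Set (Fin n)) (j : ℤ) (γ : Lat d) : Submodule ℂ (FaceT a → ℂ) :=
  Submodule.map (ishDelta a ε) (ishChain a E F (j - 1) γ)

/-- The degree-γ component of the cohomology of the Ishida complex ℧•_F(M) at absolute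
dimension `j` (cohomological degree `j − d_F`). -/
abbrev ishH (a : Fin n → Lat d) (E : Set (Lat d)) (ε : Set (Fin n) → Set (Fin n) → ℂ)
    (F : Set (Fin n)) (j : ℤ) (γ : Lat d) :=
  ↥(ishZ a E ε F j γ) ⧸
    Submodule.comap (ishZ a E ε F j γ).subtype (ishB a E ε F j γ)

/-- Nonvanishing of the degree-γ component of the cohomology of the Ishida complex. -/
def ishHne (a : Fin n → Lat d) (E : Set (Lat d)) (ε : Set (Fin n) → Set (Fin n) → ℂ)
    (F : Set (Fin n)) (j : ℤ) (γ : Lat d) : Prop :=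
  ¬ (ishZ a E ε F j γ ≤ ishB a E ε F j γ)

/-- Degree-γ part of the term of ω•_{S_A} in cohomological degree `i`:
functions on the faces `G` with `d_{A/G} = i` and `γ ∈ ℕG − ℕA`. -/
def omChain (a : Fin n → Lat d) (i : ℤ) (γ : Lat d) : Submodule ℂ (FaceT a → ℂ) :=
  funSupported {G : FaceT a | (dimF a G.1 : ℤ) = (d : ℤ) - i ∧ γ ∈ NFmNA a G.1}

/-- Degree-γ part of the differential of ω•_{S_A}: the component from a face `G'` to a face
`G''` covered by it is `ε G' G''` times the natural projection ℂ{ℕG'−ℕA} → ℂ{ℕG''−ℕA}. -/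
def omDelta (a : Fin n → Lat d) (ε : Set (Fin n) → Set (Fin n) → ℂ) (γ : Lat d) :
    (FaceT a → ℂ) →ₗ[ℂ] (FaceT a → ℂ) where
  toFun c := fun G'' =>
    if γ ∈ NFmNA a G''.1 then
      ∑ G' : FaceT a,
        if G''.1 ⊆ G'.1 ∧ dimF a G'.1 = dimF a G''.1 + 1 then ε G'.1 G''.1 * c G' else 0
    else 0
  map_add' x y := by
    funext G''
    by_cases hγ : γ ∈ NFmNA a G''.1
    · simp only [Pi.add_apply, hγ, if_true, ← Finset.sum_add_distrib]
      refine Finset.sum_congr rfl fun G' _ => ?_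
      by_cases h : G''.1 ⊆ G'.1 ∧ dimF a G'.1 = dimF a G''.1 + 1
      · simp [h, mul_add]
      · simp [h]
    · simp [hγ]
  map_smul' r x := by
    funext G''
    by_cases hγ : γ ∈ NFmNA a G''.1
    · simp only [Pi.smul_apply, smul_eq_mul, RingHom.id_apply, hγ, if_true, Finset.mul_sum]
      refine Finset.sum_congr rfl fun G' _ => ?_
      by_cases h : G''.1 ⊆ G'.1 ∧ dimF a G'.1 = dimF a G''.1 + 1
      · simp only [h, and_self, if_true]; ring
      · simp [h]
    · simp [hγ]

/-- Degree-γ cocycles of ω•_{S_A} in cohomological degree `i`. -/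
def omZ (a : Fin n → Lat d) (ε : Set (Fin n) → Set (Fin n) → ℂ) (i : ℤ) (γ : Lat d) :
    Submodule ℂ (FaceT a → ℂ) :=
  omChain a i γ ⊓ LinearMap.ker (omDelta a ε γ)

/-- Degree-γ coboundaries of ω•_{S_A} in cohomological degree `i`. -/
def omB (a : Fin n → Lat d) (ε : Set (Fin n) → Set (Fin n) → ℂ) (i : ℤ) (γ : Lat d) :
    Submodule ℂ (FaceT a → ℂ) :=
  Submodule.map (omDelta a ε γ) (omChain a (i - 1) γ)

/-- Nonvanishing of H^i(ω•_{S_A})_γ. -/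
def omHne (a : Fin n → Lat d) (ε : Set (Fin n) → Set (Fin n) → ℂ) (i : ℤ) (γ : Lat d) : Prop :=
  ¬ (omZ a ε i γ ≤ omB a ε i γ)

/-- A ℤ^d-graded S_A-module, presented by its grading together with the (degree-shifting)
action of the monomials t^u, u ∈ ℕA. -/
structure GradedSAMod (a : Fin n → Lat d) (M : Type) [AddCommGroup M] [Module ℂ M] where
  decomp : Lat d → Submodule ℂ M
  internal : DirectSum.IsInternal decomp
  act : (u : Lat d) → u ∈ NA a → (M →ₗ[ℂ] M)
  act_zero : ∀ h0 : (0 : Lat d) ∈ NA a, act 0 h0 = LinearMap.id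
  act_add : ∀ (u : Lat d) (hu : u ∈ NA a) (v : Lat d) (hv : v ∈ NA a) (huv : u + v ∈ NA a),
    act (u + v) huv = (act u hu).comp (act v hv)
  act_grade : ∀ (u : Lat d) (hu : u ∈ NA a) (γ : Lat d), ∀ m ∈ decomp γ,
    act u hu m ∈ decomp (γ + u)

/-- Finite generation over S_A. -/
def GradedSAMod.FGmod {a : Fin n → Lat d} {M : Type} [AddCommGroup M] [Module ℂ M]
    (g : GradedSAMod a M) : Prop :=
  ∃ S : Finset M, ∀ m : M,
    m ∈ Submodule.span ℂ {x | ∃ u, ∃ hu : u ∈ NA a, ∃ s ∈ S, x = g.act u hu s}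

/-- Degrees of nonzero homogeneous elements of `M` that survive in the localization
`M[∂^{−H}]` (i.e. are killed by no power of t^{σ_H}). -/
def GradedSAMod.survTdeg {a : Fin n → Lat d} {M : Type} [AddCommGroup M] [Module ℂ M]
    (g : GradedSAMod a M) (H : Set (Fin n)) : Set (Lat d) :=
  {γ | ∃ m ∈ g.decomp γ, m ≠ 0 ∧ ∀ (k : ℕ) (hk : k • sigmaF a H ∈ NA a), g.act _ hk m ≠ 0}

/-- The quasidegree set of the localization `M[∂^{−H}]` of a finitely generated graded
module `M`: the union over `k` of the Zariski closures of the true degree sets of the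
finitely generated graded submodules t^{−kσ_H}·M of the localization. -/
def GradedSAMod.qdegLoc {a : Fin n → Lat d} {M : Type} [AddCommGroup M] [Module ℂ M]
    (g : GradedSAMod a M) (H : Set (Fin n)) : Set (CS d) :=
  ⋃ k : ℕ, zClosure (toC '' {γ : Lat d | γ + k • sigmaF a H ∈ g.survTdeg H})

/-- A ℂ-submodule is graded: it is spanned by its homogeneous elements. -/
def IsGradedSubC {d : ℕ} {M : Type} [AddCommGroup M] [Module ℂ M]
    (decomp : Lat d → Submodule ℂ M) (N : Submodule ℂ M) : Prop :=
  N = Submodule.span ℂ ((N : Set M) ∩ ⋃ γ : Lat d, (decomp γ : Set M))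

/-- A ℂ-submodule is an S_A-submodule: stable under the monomial action. -/
def IsStableSub {a : Fin n → Lat d} {M : Type} [AddCommGroup M] [Module ℂ M]
    (g : GradedSAMod a M) (N : Submodule ℂ M) : Prop :=
  ∀ (u : Lat d) (hu : u ∈ NA a), ∀ m ∈ N, g.act u hu m ∈ N

/-- The semigroup ring S_A = ℂ[ℕA] as a subalgebra of ℂ[ℤ^d]. -/
def SAlg (a : Fin n → Lat d) : Subalgebra ℂ (Laur d) :=
  Algebra.adjoin ℂ {x | ∃ α ∈ NA a, x = mono α}

/-- The monomial t^u, u ∈ ℕA, as an element of S_A. -/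
def smono (a : Fin n → Lat d) (u : Lat d) (hu : u ∈ NA a) : ↥(SAlg a) :=
  ⟨mono u, Algebra.subset_adjoin ⟨u, hu, rfl⟩⟩

/-- The underlying ℂ-vector space of the monomial module ℂ{E}: finitely supported
functions on `E`. -/
abbrev wMod (d : ℕ) (E : Set (Lat d)) := ↥(Finsupp.supported ℂ ℂ E)

/-- The action of the monomial t^w on ℂ{E}: shift the degree by `w`, truncate back to `E`. -/
def wAct {d : ℕ} (E : Set (Lat d)) (w : Lat d) : wMod d E →ₗ[ℂ] wMod d E :=
  (Finsupp.restrictDom ℂ ℂ E).comp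
    ((Finsupp.lmapDomain ℂ ℂ (fun γ => γ + w)).comp (Finsupp.supported ℂ ℂ E).subtype)

/-- The elements annihilated by some power of the ideal generated by the t^{a_i}, i ∉ F. -/
def torsionAt (a : Fin n → Lat d) (F : Set (Fin n)) {ML : Type} [AddCommGroup ML]
    [Module ℂ ML] (TL : (u : Lat d) → u ∈ NA a → (ML →ₗ[ℂ] ML)) : Set ML :=
  {y | ∃ k : ℕ, ∀ f : Fin k → Fin n, (∀ j, f j ∉ F) →
    ∀ h : (∑ j, a (f j)) ∈ NA a, TL (∑ j, a (f j)) h y = 0}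

/-- The toric ideal I_A ⊆ R_A = ℂ[∂_1,…,∂_n]. -/
def toricIdeal (a : Fin n → Lat d) : Ideal (MvPolynomial (Fin n) ℂ) :=
  RingHom.ker (MvPolynomial.aeval (fun i => mono (a i)) : MvPolynomial (Fin n) ℂ →ₐ[ℂ] Laur d)

/-- The ideal I_F^A = I_A + ⟨∂_i : a_i ∉ F⟩ of R_A. -/
def IFA (a : Fin n → Lat d) (F : Set (Fin n)) : Ideal (MvPolynomial (Fin n) ℂ) :=
  toricIdeal a ⊔ Ideal.span {p | ∃ i, i ∉ F ∧ p = MvPolynomial.X i}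

/-- An R_A-submodule is graded: it is spanned by its homogeneous elements. -/
def IsGradedSubR {d n : ℕ} {M : Type} [AddCommGroup M] [Module ℂ M]
    [Module (MvPolynomial (Fin n) ℂ) M]
    (decomp : Lat d → Submodule ℂ M) (N : Submodule (MvPolynomial (Fin n) ℂ) M) : Prop :=
  N = Submodule.span (MvPolynomial (Fin n) ℂ) ((N : Set M) ∩ ⋃ γ : Lat d, (decomp γ : Set M))

/-- `h` is the primitive integral support function of the facet `G`. -/
def IsPISF (a : Fin n → Lat d) (G : Set (Fin n)) (h : Lat d →ₗ[ℤ] ℤ) : Prop :=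
  (∃ x, h x = 1) ∧ (∀ i, 0 ≤ h (a i)) ∧ (∀ i, h (a i) = 0 ↔ i ∈ G)

/-- The ℂ-linear extension of an integral linear form to ℂ^d. -/
def hC {d : ℕ} (h : Lat d →ₗ[ℤ] ℤ) (β : CS d) : ℂ :=
  ∑ j : Fin d, β j * ((h (Pi.single j 1) : ℤ) : ℂ)



/-! ### Auxiliary lemmas -/

section Aux

open scoped Pointwise

variable {d n : ℕ}

lemma toR_add (α β : Lat d) : toR (α + β) = toR α + toR β := by
  funext i; simp [toR]

/-- `γ ↦ f (toR γ)` as an additive hom. -/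
def HfHom {d : ℕ} (f : (Fin d → ℝ) →L[ℝ] ℝ) : Lat d →+ ℝ :=
  AddMonoidHom.mk' (fun γ => f (toR γ)) (fun α β => by
    show f (toR (α + β)) = f (toR α) + f (toR β)
    rw [toR_add, map_add])

lemma HfHom_apply {d : ℕ} (f : (Fin d → ℝ) →L[ℝ] ℝ) (γ : Lat d) :
    HfHom f γ = f (toR γ) := rfl

lemma mem_cone_of (a : Fin n → Lat d) (F : Set (Fin n)) (c : Fin n → ℝ)
    (h0 : ∀ i, 0 ≤ c i) (hF : ∀ i, i ∉ F → c i = 0) :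
    ∑ i, c i • toR (a i) ∈ cone a F := ⟨c, h0, hF, rfl⟩

lemma cone_smul (a : Fin n → Lat d) (F : Set (Fin n)) {x : Fin d → ℝ} {t : ℝ} (ht : 0 ≤ t)
    (hx : x ∈ cone a F) : t • x ∈ cone a F := by
  obtain ⟨c, h0, hcF, rfl⟩ := hx
  refine ⟨fun i => t * c i, fun i => mul_nonneg ht (h0 i),
    fun i hi => by show t * c i = 0; rw [hcF i hi, mul_zero], ?_⟩
  simp only [Finset.smul_sum, smul_smul]

lemma col_mem_cone (a : Fin n → Lat d) {F : Set (Fin n)} {i : Fin n} (hi : i ∈ F) :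
    toR (a i) ∈ cone a F := by
  refine ⟨fun j => if j = i then 1 else 0, ?_, ?_, ?_⟩
  · intro j; by_cases h : j = i <;> simp [h]
  · intro j hj
    by_cases h : j = i
    · subst h; exact absurd hi hj
    · simp [h]
  · simp [ite_smul]

/-- If a nonnegative combination of the columns lies in the real cone of a face `F`,
then any column with a positive coefficient belongs to `F`. -/
lemma cone_mem_col {a : Fin n → Lat d} {F : Set (Fin n)} (hF : IsFace a F)
    {c : Fin n → ℝ} (h0 : ∀ i, 0 ≤ c i)
    (hc : ∑ i, c i • toR (a i) ∈ cone a F) {i1 : Fin n} (h1 : 0 < c i1) : i1 ∈ F := by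
  classical
  set g : Fin n → (Fin d → ℝ) := fun i => c i • toR (a i) with hg
  have hupd : ∑ i, Function.update g i1 0 i
      = ∑ i, (Function.update c i1 0 i) • toR (a i) := by
    refine Finset.sum_congr rfl fun i _ => ?_
    by_cases h : i = i1
    · subst h; simp [Function.update_self]
    · simp [Function.update_of_ne h, hg]
  have hsplit : ∑ i, g i = g i1 + ∑ i, Function.update g i1 0 i := by
    rw [Finset.sum_update_of_mem (Finset.mem_univ i1)]
    rw [Finset.sum_eq_sum_sdiff_singleton_add (Finset.mem_univ i1) g]
    abel
  have hxmem : g i1 ∈ cone a Set.univ :=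
    cone_smul a _ (h0 i1) (col_mem_cone a (Set.mem_univ i1))
  have hymem : ∑ i, Function.update g i1 0 i ∈ cone a Set.univ := by
    rw [hupd]
    refine mem_cone_of a _ _ (fun i => ?_) (fun i hi => absurd (Set.mem_univ i) hi)
    by_cases h : i = i1
    · subst h; simp
    · simp [Function.update_of_ne h, h0 i]
  have hsum : g i1 + ∑ i, Function.update g i1 0 i ∈ cone a F := by
    rw [← hsplit]; exact hc
  have hfirst : g i1 ∈ cone a F := (hF.1 _ _ hxmem hymem hsum).1
  have : toR (a i1) ∈ cone a F := by
    have h2 := cone_smul a F (inv_nonneg.mpr h1.le) hfirst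
    rwa [hg, smul_smul, inv_mul_cancel₀ h1.ne', one_smul] at h2
  exact hF.2 i1 this

/-- Existence of a supporting functional for a proper face: a linear functional vanishing
on the columns of `F` and strictly positive on all other columns. -/
lemma face_functional (a : Fin n → Lat d) {F : Set (Fin n)} (hF : IsFace a F)
    {i0 : Fin n} (hi0 : i0 ∉ F) :
    ∃ f : (Fin d → ℝ) →L[ℝ] ℝ,
      (∀ i ∈ F, f (toR (a i)) = 0) ∧ ∀ i ∉ F, 0 < f (toR (a i)) := by
  classical
  -- the linear maps
  set L2 : (Fin n → ℝ) →ₗ[ℝ] (Fin d → ℝ) :=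
    { toFun := fun c => ∑ i, c i • toR (a i)
      map_add' := fun c c' => by
        simp [add_smul, Finset.sum_add_distrib]
      map_smul' := fun t c => by
        simp [Finset.smul_sum, smul_smul] } with hL2
  set mask : (Fin n → ℝ) →ₗ[ℝ] (Fin n → ℝ) :=
    { toFun := fun c i => if i ∈ F then c i else 0
      map_add' := fun c c' => by
        funext i; by_cases h : i ∈ F <;> simp [h]
      map_smul' := fun t c => by
        funext i; by_cases h : i ∈ F <;> simp [h] } with hmask
  set L : (Fin n → ℝ) →ₗ[ℝ] (Fin d → ℝ) := L2.comp mask with hL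
  -- the compact convex base and the closed subspace
  set T : Set (Fin n → ℝ) := stdSimplex ℝ (Fin n) ∩ {c | ∀ i ∈ F, c i = 0} with hT
  set K : Set (Fin d → ℝ) := L2 '' T with hK
  set W : Submodule ℝ (Fin d → ℝ) := LinearMap.range L with hW
  set S : Set (Fin d → ℝ) := K + (W : Set (Fin d → ℝ)) with hS
  have hTclosed2 : IsClosed {c : Fin n → ℝ | ∀ i ∈ F, c i = 0} := by
    have : {c : Fin n → ℝ | ∀ i ∈ F, c i = 0} = ⋂ i ∈ F, {c : Fin n → ℝ | c i = 0} := by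
      ext c; simp
    rw [this]
    exact isClosed_biInter fun i _ => isClosed_eq (continuous_apply i) continuous_const
  have hTcpt : IsCompact T := (isCompact_stdSimplex _ _).inter_right hTclosed2
  have hTconv : Convex ℝ T := by
    refine (convex_stdSimplex ℝ _).inter ?_
    intro x hx y hy s t hs ht hst i hi
    simp only [Pi.add_apply, Pi.smul_apply, smul_eq_mul, hx i hi, hy i hi, mul_zero, add_zero]
  have hKcpt : IsCompact K := hTcpt.image L2.continuous_of_finiteDimensional
  have hKconv : Convex ℝ K := hTconv.linear_image L2
  have hSclosed : IsClosed S :=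
    IsClosed.add_left_of_isCompact W.closed_of_finiteDimensional hKcpt
  have hSconv : Convex ℝ S := hKconv.add W.convex
  -- 0 is not in S
  have h0S : (0 : Fin d → ℝ) ∉ S := by
    intro h0
    rw [hS, Set.mem_add] at h0
    obtain ⟨p, hpK, z, hzW, hpz⟩ := h0
    obtain ⟨c, hcT, rfl⟩ := hpK
    obtain ⟨c', rfl⟩ := hzW
    set pos : Fin n → ℝ := fun i => max (c' i) 0 with hpos
    set neg : Fin n → ℝ := fun i => max (-(c' i)) 0 with hneg
    have hdiff : pos - neg = c' := by
      funext i
      rcases le_total 0 (c' i) with h | h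
      · simp [hpos, hneg, Pi.sub_apply, max_eq_left h, max_eq_right (neg_nonpos.mpr h)]
      · simp [hpos, hneg, Pi.sub_apply, max_eq_right h, max_eq_left (neg_nonneg.mpr h)]
    have heq : L2 c + L pos = L neg := by
      have h1 : L2 c + (L pos - L neg) = 0 := by
        rw [← map_sub, hdiff]; exact hpz
      have h2 : L2 c + L pos - L neg = 0 := by rw [add_sub_assoc]; exact h1
      exact sub_eq_zero.mp h2
    have hx : L2 c ∈ cone a Set.univ :=
      mem_cone_of a _ c hcT.1.1 (fun i hi => absurd (Set.mem_univ i) hi)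
    have hy : L pos ∈ cone a Set.univ := by
      refine mem_cone_of a _ (mask pos) (fun i => ?_) (fun i hi => absurd (Set.mem_univ i) hi)
      by_cases h : i ∈ F <;> simp [hmask, h, hpos, hneg, le_sup_right]
    have hLneg : L neg ∈ cone a F := by
      refine mem_cone_of a _ (mask neg) (fun i => ?_) (fun i hi => ?_)
      · by_cases h : i ∈ F <;> simp [hmask, h, hpos, hneg, le_sup_right]
      · simp [hmask, hi]
    have hsum : L2 c + L pos ∈ cone a F := by rw [heq]; exact hLneg
    have hcF : L2 c ∈ cone a F := (hF.1 _ _ hx hy hsum).1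
    obtain ⟨i1, -, hne⟩ :=
      Finset.exists_ne_zero_of_sum_ne_zero (by rw [hcT.1.2]; exact one_ne_zero)
    have h1 : 0 < c i1 := (hcT.1.1 i1).lt_of_ne (Ne.symm hne)
    have hi1F : i1 ∈ F := cone_mem_col hF hcT.1.1 hcF h1
    exact hne (hcT.2 i1 hi1F)
  obtain ⟨f, u, hfu, hfS⟩ := geometric_hahn_banach_point_closed hSconv hSclosed h0S
  have hf0 : (0 : ℝ) < u := by simpa using hfu
  -- indicator functions
  have hind : ∀ i : Fin n, i ∉ F → (fun j => if j = i then (1 : ℝ) else 0) ∈ T := by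
    intro i hi
    refine ⟨⟨fun j => by by_cases h : j = i <;> simp [h], by simp⟩, fun j hj => ?_⟩
    have : j ≠ i := fun h => hi (h ▸ hj)
    simp [this]
  have hcol_mem_K : ∀ i : Fin n, i ∉ F → toR (a i) ∈ K := by
    intro i hi
    refine ⟨fun j => if j = i then (1 : ℝ) else 0, hind i hi, ?_⟩
    show ∑ j, (if j = i then (1 : ℝ) else 0) • toR (a j) = toR (a i)
    simp [ite_smul]
  have hcol_mem_W : ∀ i : Fin n, i ∈ F → toR (a i) ∈ W := by
    intro i hi
    refine ⟨fun j => if j = i then (1 : ℝ) else 0, ?_⟩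
    show ∑ j, (if j ∈ F then (if j = i then (1 : ℝ) else 0) else 0) • toR (a j) = toR (a i)
    have : ∀ j : Fin n,
        (if j ∈ F then (if j = i then (1 : ℝ) else 0) else 0) • toR (a j)
          = if j = i then toR (a j) else 0 := by
      intro j
      by_cases h : j = i
      · subst h; simp [hi]
      · by_cases h' : j ∈ F <;> simp [h, h']
    rw [Finset.sum_congr rfl fun j _ => this j]
    simp
  -- f vanishes on W
  have hW0 : ∀ z ∈ W, f z = 0 := by
    intro z hz
    by_contra hfz
    set p : Fin d → ℝ := toR (a i0) with hp
    have hpK : p ∈ K := hcol_mem_K i0 hi0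
    have hmem : ∀ t : ℝ, u < f p + t * f z := by
      intro t
      have : p + t • z ∈ S := Set.add_mem_add hpK (W.smul_mem t hz)
      have := hfS _ this
      simpa [map_add, map_smul, smul_eq_mul] using this
    have := hmem ((u - 1 - f p) / f z)
    rw [div_mul_cancel₀ _ hfz] at this
    linarith
  refine ⟨f, fun i hi => hW0 _ (hcol_mem_W i hi), fun i hi => ?_⟩
  calc (0 : ℝ) < u := hf0
    _ < f (toR (a i)) := by
        have : toR (a i) ∈ S := by
          have : toR (a i) + 0 ∈ S := Set.add_mem_add (hcol_mem_K i hi) W.zero_mem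
          simpa using this
        exact hfS _ this

/-! ### Sign lemmas for the functional on the semigroups -/

lemma HfHom_nonneg_NA {a : Fin n → Lat d} (f : (Fin d → ℝ) →L[ℝ] ℝ)
    (h : ∀ i, 0 ≤ f (toR (a i))) : ∀ γ ∈ NA a, 0 ≤ HfHom f γ := by
  intro γ hγ
  induction hγ using AddSubmonoid.closure_induction with
  | mem x hx => obtain ⟨i, rfl⟩ := hx; exact h i
  | zero => simp
  | add x y _ _ hx hy => rw [map_add]; exact add_nonneg hx hy

lemma HfHom_zero_NFace {a : Fin n → Lat d} {G : Set (Fin n)} (f : (Fin d → ℝ) →L[ℝ] ℝ)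
    (h : ∀ i ∈ G, f (toR (a i)) = 0) : ∀ γ ∈ NFace a G, HfHom f γ = 0 := by
  intro γ hγ
  induction hγ using AddSubmonoid.closure_induction with
  | mem x hx =>
      obtain ⟨i, hiG, rfl⟩ := hx; exact h i hiG
  | zero => simp
  | add x y _ _ hx hy => rw [map_add, hx, hy, add_zero]

lemma HfHom_nonpos_NFmNA {a : Fin n → Lat d} {G : Set (Fin n)} (f : (Fin d → ℝ) →L[ℝ] ℝ)
    (h0 : ∀ i ∈ G, f (toR (a i)) = 0) (hnn : ∀ i, 0 ≤ f (toR (a i))) :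
    ∀ γ ∈ NFmNA a G, HfHom f γ ≤ 0 := by
  rintro γ ⟨v, hv, w, hw, rfl⟩
  rw [AddMonoidHom.map_sub, HfHom_zero_NFace f h0 v hv, zero_sub, neg_nonpos]
  exact HfHom_nonneg_NA f hnn w hw

/-! ### Membership lemmas -/

lemma col_mem_NA (a : Fin n → Lat d) (i : Fin n) : a i ∈ NA a :=
  AddSubmonoid.subset_closure ⟨i, rfl⟩

lemma col_mem_NFace (a : Fin n → Lat d) {G : Set (Fin n)} {i : Fin n} (hi : i ∈ G) :
    a i ∈ NFace a G :=
  AddSubmonoid.subset_closure ⟨i, hi, rfl⟩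

lemma sigmaF_mem_NFace (a : Fin n → Lat d) {F G : Set (Fin n)} (h : F ⊆ G) :
    sigmaF a F ∈ NFace a G := by
  refine AddSubmonoid.sum_mem _ fun i _ => ?_
  by_cases hi : i ∈ F
  · rw [if_pos hi]; exact col_mem_NFace a (h hi)
  · rw [if_neg hi]; exact (NFace a G).zero_mem

lemma mem_NFmNA_add {a : Fin n → Lat d} {G : Set (Fin n)} {γ u : Lat d}
    (hγ : γ ∈ NFmNA a G) (hu : u ∈ NFace a G) : γ + u ∈ NFmNA a G := by
  obtain ⟨v, hv, w, hw, rfl⟩ := hγ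
  exact ⟨v + u, add_mem hv hu, w, hw, by abel⟩

lemma mem_NFmNA_of_add {a : Fin n → Lat d} {G : Set (Fin n)} {γ z : Lat d}
    (hz : z ∈ NA a) (h : γ + z ∈ NFmNA a G) : γ ∈ NFmNA a G := by
  obtain ⟨v, hv, w, hw, hvw⟩ := h
  refine ⟨v, hv, w + z, add_mem hw hz, ?_⟩
  have : γ = v - w - z := by rw [← hvw]; abel
  rw [this]; abel

/-! ### Lemmas on the shift action `wAct` -/

lemma wAct_coe_apply (E : Set (Lat d)) (w : Lat d) (x : wMod d E) (δ : Lat d) :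
    ((wAct E w x : Lat d →₀ ℂ)) δ = if δ ∈ E then (x : Lat d →₀ ℂ) (δ - w) else 0 := by
  have h1 : (wAct E w x : Lat d →₀ ℂ)
      = Finsupp.filter (· ∈ E) (Finsupp.mapDomain (fun γ => γ + w) (x : Lat d →₀ ℂ)) := rfl
  rw [h1, Finsupp.filter_apply]
  by_cases hδ : δ ∈ E
  · simp only [hδ, if_true]
    have hinj : Function.Injective (fun γ : Lat d => γ + w) := fun u v h => by
      simpa using congrArg (fun z => z - w) h
    have h2 : δ - w + w = δ := sub_add_cancel δ w
    conv_lhs => rw [← h2]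
    exact Finsupp.mapDomain_apply hinj _ _
  · simp [hδ]

lemma wAct_eq_zero {E : Set (Lat d)} {w : Lat d} (x : wMod d E)
    (h : ∀ γ ∈ (x : Lat d →₀ ℂ).support, γ + w ∉ E) : wAct E w x = 0 := by
  apply Subtype.ext
  ext δ
  rw [wAct_coe_apply]
  by_cases hδ : δ ∈ E
  · simp only [hδ, if_true]
    by_contra hne
    have hmem : δ - w ∈ (x : Lat d →₀ ℂ).support := Finsupp.mem_support_iff.mpr hne
    have := h _ hmem
    rw [sub_add_cancel] at this
    exact this hδ
  · simp [hδ]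

lemma wAct_eq_zero_imp {E : Set (Lat d)} {w : Lat d} (hup : ∀ γ ∈ E, γ + w ∈ E)
    (x : wMod d E) (hx : wAct E w x = 0) : x = 0 := by
  apply Subtype.ext
  ext γ
  by_contra hne
  have hγE : γ ∈ E := x.2 (Finsupp.mem_support_iff.mpr hne)
  have hγw : γ + w ∈ E := hup γ hγE
  have := congrArg (fun z : wMod d E => (z : Lat d →₀ ℂ) (γ + w)) hx
  simp only [wAct_coe_apply, hγw, if_true, add_sub_cancel_right] at this
  exact hne (by simpa using this)

lemma wAct_surjective {E : Set (Lat d)} {w : Lat d} (hup : ∀ γ ∈ E, γ + w ∈ E)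
    (hdown : ∀ γ, γ + w ∈ E → γ ∈ E) (x : wMod d E) :
    ∃ x' : wMod d E, wAct E w x' = x := by
  have hval : ∀ γ : Lat d,
      (Finsupp.equivMapDomain (Equiv.addRight w).symm (x : Lat d →₀ ℂ)) γ
        = (x : Lat d →₀ ℂ) (γ + w) := by
    intro γ
    rw [Finsupp.equivMapDomain_apply]
    simp
  have hsupp : Finsupp.equivMapDomain (Equiv.addRight w).symm (x : Lat d →₀ ℂ)
      ∈ Finsupp.supported ℂ ℂ E := by
    rw [Finsupp.mem_supported']
    intro γ hγ
    rw [hval]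
    by_contra hne
    have : γ + w ∈ E := x.2 (Finsupp.mem_support_iff.mpr hne)
    exact hγ (hdown γ this)
  refine ⟨⟨_, hsupp⟩, ?_⟩
  apply Subtype.ext
  ext δ
  rw [wAct_coe_apply]
  by_cases hδ : δ ∈ E
  · simp only [hδ, if_true]
    show (Finsupp.equivMapDomain (Equiv.addRight w).symm (x : Lat d →₀ ℂ)) (δ - w)
        = (x : Lat d →₀ ℂ) δ
    rw [hval, sub_add_cancel]
  · simp only [hδ, if_false]
    by_contra hne
    exact hδ (x.2 (Finsupp.mem_support_iff.mpr fun h => hne h.symm))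

end Aux

/-- Fix a face `F ⪯ A` and let Γ_F(M) be the submodule of the
localization M[∂^{−F}] of elements annihilated by a power of the ideal generated by the
t^{a_i}, a_i ∉ F.  For faces `F' ⪯ A` and the module ℂ{ℕF′−ℕA} (with localization
`(ML, ι)` at t^{σ_F}, axiomatized by its defining properties):
Γ_F(ℂ{ℕF′−ℕA}) = ℂ{ℕF−ℕA} if F′ = F (the localization map is bijective and everything is
torsion), and Γ_F(ℂ{ℕF′−ℕA}) = 0 if F′ ≠ F.  Consequently applying Γ_F termwise to
ω•_{S_A} yields a complex concentrated in cohomological degree d_{A/F} with value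
ℂ{ℕF−ℕA}. -/
theorem gammaF_of_omega_terms
    {d n : ℕ} (hd : 0 < d) (hn : 0 < n) (a : Fin n → Lat d)
    (hZA : SpansZ a) (hPt : Pointed a)
    (F F' : Set (Fin n)) (hF : IsFace a F) (hF' : IsFace a F')
    (ML : Type) [AddCommGroup ML] [Module ℂ ML]
    (TL : (u : Lat d) → u ∈ NA a → (ML →ₗ[ℂ] ML))
    (hTzero : ∀ h0 : (0 : Lat d) ∈ NA a, TL 0 h0 = LinearMap.id)
    (hTadd : ∀ (u : Lat d) (hu : u ∈ NA a) (v : Lat d) (hv : v ∈ NA a)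
      (huv : u + v ∈ NA a), TL (u + v) huv = (TL u hu).comp (TL v hv))
    (ι : wMod d (NFmNA a F') →ₗ[ℂ] ML)
    (hcomm : ∀ (u : Lat d) (hu : u ∈ NA a),
      (TL u hu).comp ι = ι.comp (wAct (NFmNA a F') u))
    (hσ : sigmaF a F ∈ NA a)
    (hbij : Function.Bijective (TL (sigmaF a F) hσ))
    (hsurj : ∀ y : ML, ∃ (k : ℕ) (hk : k • sigmaF a F ∈ NA a) (x : wMod d (NFmNA a F')),
      TL (k • sigmaF a F) hk y = ι x)
    (hker : ∀ x : wMod d (NFmNA a F'), ι x = 0 ↔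
      ∃ (k : ℕ) (_ : k • sigmaF a F ∈ NA a), wAct (NFmNA a F') (k • sigmaF a F) x = 0) :
    (F' = F → Function.Bijective ι ∧ ∀ y : ML, y ∈ torsionAt a F TL) ∧
    (F' ≠ F → ∀ y ∈ torsionAt a F TL, y = 0) ∧
    (∀ i : ℤ, i ≠ (d : ℤ) - (dimF a F : ℤ) → (dimF a F' : ℤ) = (d : ℤ) - i →
      ∀ y ∈ torsionAt a F TL, y = 0) := by
  classical
  have TLcongr : ∀ (u v : Lat d) (hu : u ∈ NA a) (hv : v ∈ NA a), u = v →
      TL u hu = TL v hv := by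
    intro u v hu hv h; subst h; rfl
  have hσk : ∀ k : ℕ, k • sigmaF a F ∈ NA a := fun k => nsmul_mem hσ k
  have hTLpow : ∀ (k : ℕ) (hk : k • sigmaF a F ∈ NA a), Function.Injective (TL _ hk) := by
    intro k
    induction k with
    | zero =>
        intro hk
        rw [TLcongr _ 0 hk (NA a).zero_mem (zero_nsmul _), hTzero]
        exact fun x y h => h
    | succ k ih =>
        intro hk
        have hmem : k • sigmaF a F + sigmaF a F ∈ NA a := add_mem (hσk k) hσ
        rw [TLcongr _ _ hk hmem (succ_nsmul _ _), hTadd _ (hσk k) _ hσ hmem,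
          LinearMap.coe_comp]
        exact (ih (hσk k)).comp hbij.injective
  have hcomm' : ∀ (u : Lat d) (hu : u ∈ NA a) (x : wMod d (NFmNA a F')),
      TL u hu (ι x) = ι (wAct (NFmNA a F') u x) := by
    intro u hu x
    have := LinearMap.ext_iff.mp (hcomm u hu) x
    simpa [LinearMap.comp_apply] using this
  have hιinj : F ⊆ F' → Function.Injective ι := by
    intro hsub
    have hker0 : ∀ x, ι x = 0 → x = 0 := by
      intro x hx
      obtain ⟨k, hk, h0⟩ := (hker x).mp hx
      refine wAct_eq_zero_imp (fun γ hγ => mem_NFmNA_add hγ ?_) x h0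
      exact nsmul_mem (sigmaF_mem_NFace a hsub) k
    intro x y h
    have h1 : ι (x - y) = 0 := by rw [map_sub, h, sub_self]
    exact sub_eq_zero.mp (hker0 _ h1)
  have P2 : F' ≠ F → ∀ y ∈ torsionAt a F TL, y = 0 := by
    intro hne y hy
    by_cases hsub : F ⊆ F'
    · -- F ⊊ F' : use an element of F' \ F
      obtain ⟨i0, hi0F', hi0F⟩ := Set.exists_of_ssubset (hsub.ssubset_of_ne hne.symm)
      obtain ⟨k0, hk0⟩ := hy
      obtain ⟨k, hk, x, hx⟩ := hsurj y
      have hwNA : (∑ _j : Fin k0, a i0) ∈ NA a :=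
        AddSubmonoid.sum_mem _ fun j _ => col_mem_NA a i0
      have hwF' : (∑ _j : Fin k0, a i0) ∈ NFace a F' :=
        AddSubmonoid.sum_mem _ fun j _ => col_mem_NFace a hi0F'
      have hTwy : TL _ hwNA y = 0 := hk0 (fun _ => i0) (fun _ => hi0F) hwNA
      have hmem1 : (∑ _j : Fin k0, a i0) + k • sigmaF a F ∈ NA a := add_mem hwNA (hσk k)
      have e1 : TL _ hwNA (ι x) = TL _ hmem1 y := by
        rw [← hx, hTadd _ hwNA _ (hσk k) hmem1]; rfl
      have e2 : TL _ hmem1 y = 0 := by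
        rw [TLcongr _ (k • sigmaF a F + ∑ _j : Fin k0, a i0) hmem1
            (add_mem (hσk k) hwNA) (add_comm _ _),
          hTadd _ (hσk k) _ hwNA (add_mem (hσk k) hwNA)]
        show TL _ (hσk k) (TL _ hwNA y) = 0
        rw [hTwy, map_zero]
      have hwx : ι (wAct (NFmNA a F') (∑ _j : Fin k0, a i0) x) = 0 := by
        rw [← hcomm' _ hwNA, e1, e2]
      have hwAct0 : wAct (NFmNA a F') (∑ _j : Fin k0, a i0) x = 0 :=
        hιinj hsub (by rw [hwx, map_zero])
      have hx0 : x = 0 :=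
        wAct_eq_zero_imp (fun γ hγ => mem_NFmNA_add hγ hwF') x hwAct0
      apply hTLpow k hk
      rw [hx, hx0, map_zero, map_zero]
    · -- F ⊄ F' : the localization is zero
      obtain ⟨i1, hi1F, hi1F'⟩ := Set.not_subset.mp hsub
      obtain ⟨f, hf0, hfpos⟩ := face_functional a hF' hi1F'
      have hnn : ∀ i, 0 ≤ f (toR (a i)) := by
        intro i; by_cases h : i ∈ F'
        · rw [hf0 i h]
        · exact (hfpos i h).le
      obtain ⟨k, hk, x, hx⟩ := hsurj y
      have hcpos : 0 < HfHom f (sigmaF a F) := by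
        unfold sigmaF
        rw [map_sum]
        refine Finset.sum_pos' (fun i _ => ?_) ⟨i1, Finset.mem_univ i1, ?_⟩
        · by_cases h : i ∈ F
          · simp only [h, if_true]; exact hnn i
          · simp only [h, if_false, map_zero]; exact le_refl 0
        · simp only [hi1F, if_true]; exact hfpos i1 hi1F'
      set c : ℝ := HfHom f (sigmaF a F) with hc
      set B : ℝ := ∑ γ ∈ (x : Lat d →₀ ℂ).support, |HfHom f γ| with hB
      obtain ⟨m, hm⟩ := exists_nat_gt (B / c)
      have hmc : B < m * c := (div_lt_iff₀ hcpos).mp hm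
      have h0 : wAct (NFmNA a F') (m • sigmaF a F) x = 0 := by
        refine wAct_eq_zero x (fun γ hγ hmemE => ?_)
        have h1 : HfHom f (γ + m • sigmaF a F) ≤ 0 := HfHom_nonpos_NFmNA f hf0 hnn _ hmemE
        rw [map_add, AddMonoidHom.map_nsmul, nsmul_eq_mul] at h1
        have h2 := Finset.single_le_sum (f := fun γ => |HfHom f γ|)
          (fun γ _ => abs_nonneg _) hγ
        rw [← hB] at h2
        have h3 : -B ≤ HfHom f γ := by have := neg_abs_le (HfHom f γ); linarith
        linarith
      have hιx : ι x = 0 := (hker x).mpr ⟨m, hσk m, h0⟩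
      apply hTLpow k hk
      rw [hx, hιx, map_zero]
  have P1 : F' = F → Function.Bijective ι ∧ ∀ y : ML, y ∈ torsionAt a F TL := by
    intro hFF
    subst hFF
    have hsub : F' ⊆ F' := subset_rfl
    have hinj := hιinj hsub
    have hdown : ∀ (k : ℕ) (γ : Lat d),
        γ + k • sigmaF a F' ∈ NFmNA a F' → γ ∈ NFmNA a F' :=
      fun k γ h => mem_NFmNA_of_add (hσk k) h
    have hup : ∀ (k : ℕ) (γ : Lat d),
        γ ∈ NFmNA a F' → γ + k • sigmaF a F' ∈ NFmNA a F' :=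
      fun k γ hγ => mem_NFmNA_add hγ (nsmul_mem (sigmaF_mem_NFace a hsub) k)
    have hsurjι : Function.Surjective ι := by
      intro y
      obtain ⟨k, hk, x, hx⟩ := hsurj y
      obtain ⟨x', hx'⟩ := wAct_surjective (hup k) (hdown k) x
      refine ⟨x', hTLpow k hk ?_⟩
      rw [hcomm' _ hk x', hx', ← hx]
    refine ⟨⟨hinj, hsurjι⟩, ?_⟩
    intro y
    by_cases hex : ∀ i, i ∈ F'
    · exact ⟨1, fun g hg _ => absurd (hex (g 0)) (hg 0)⟩
    · push_neg at hex
      obtain ⟨i0, hi0⟩ := hex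
      obtain ⟨f, hf0, hfpos⟩ := face_functional a hF hi0
      have hnn : ∀ i, 0 ≤ f (toR (a i)) := by
        intro i; by_cases h : i ∈ F'
        · rw [hf0 i h]
        · exact (hfpos i h).le
      obtain ⟨x', hx'⟩ := hsurjι y
      have htnene : (Finset.univ.filter (fun i => i ∉ F')).Nonempty :=
        ⟨i0, by simp [hi0]⟩
      set c : ℝ := (Finset.univ.filter (fun i => i ∉ F')).inf' htnene
        (fun i => f (toR (a i))) with hc
      have hcpos : 0 < c := by
        rw [hc, Finset.lt_inf'_iff]
        intro i hi
        exact hfpos i (by simpa using hi)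
      set B : ℝ := ∑ γ ∈ (x' : Lat d →₀ ℂ).support, |HfHom f γ| with hB
      obtain ⟨m, hm⟩ := exists_nat_gt (B / c)
      have hmc : B < m * c := (div_lt_iff₀ hcpos).mp hm
      refine ⟨m, ?_⟩
      intro g hg hmem
      have h0 : wAct (NFmNA a F') (∑ j, a (g j)) x' = 0 := by
        refine wAct_eq_zero x' (fun γ hγ hmemE => ?_)
        have h1 : HfHom f (γ + ∑ j, a (g j)) ≤ 0 := HfHom_nonpos_NFmNA f hf0 hnn _ hmemE
        rw [map_add, map_sum] at h1
        have hterm : ∀ j : Fin m, c ≤ HfHom f (a (g j)) := fun j =>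
          Finset.inf'_le _ (by simp [hg j])
        have hsum : (m : ℝ) * c ≤ ∑ j : Fin m, HfHom f (a (g j)) := by
          calc (m : ℝ) * c = ∑ _j : Fin m, c := by
                rw [Finset.sum_const, Finset.card_univ, Fintype.card_fin, nsmul_eq_mul]
            _ ≤ _ := Finset.sum_le_sum (fun j _ => hterm j)
        have h2 := Finset.single_le_sum (f := fun γ => |HfHom f γ|)
          (fun γ _ => abs_nonneg _) hγ
        rw [← hB] at h2
        have h3 : -B ≤ HfHom f γ := by have := neg_abs_le (HfHom f γ); linarith
        linarith
      rw [← hx', hcomm' _ hmem x', h0, map_zero]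
  refine ⟨P1, P2, ?_⟩
  intro i hi hdim y hy
  refine P2 ?_ y hy
  intro hFF
  rw [hFF] at hdim
  exact hi (by omega)

end

end GKZ
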